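/- Let α > 0, μ = ±1, A ∈ ℂ \ {0}, n ∈ ℤ \ {0} with |n| < 2M, and s ∈ ℝ. Set B = (e^{ihn} − 1)/(ihn). Then the function u_h(x,t) = A |n|^{−s} B e^{−it( |(2/h) sin(hn/2)|^α + μ|A|² |n|^{−2s} |B|² )} e^{inx}, x ∈ 𝕋_h, solves the fractional discrete NLS i∂_t u_h = (−Δ_h)^{α/2} u_h + μ|u_h|²u_h with initial datum d_h u₀ where u₀(x) = A |n|^{−s} e^{inx}; in particular d_h u₀(x) = A |n|^{−s} B e^{inx} for x ∈ 𝕋_h. -/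

import Mathlib

open scoped BigOperators ENNReal NNReal
open MeasureTheory

noncomputable section

/-- Mesh size `h = π / M`. -/
def mesh (M : ℕ) : ℝ := Real.pi / M

/-- Index set `{-M, …, M-1}` for the periodic lattice `𝕋_h` and its dual `𝕋_h*`. -/
def idx (M : ℕ) : Finset ℤ := Finset.Icc (-(M : ℤ)) ((M : ℤ) - 1)

/-- Lattice point `x = h j`. -/
def pt (M : ℕ) (j : ℤ) : ℝ := mesh M * j

/-- Discrete `L^p_h` norm (finite `p`), w.r.t. the normalized counting measure. -/
def dLp (M : ℕ) (p : ℝ) (f : ℤ → ℂ) : ℝ :=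
  (mesh M * ∑ j ∈ idx M, ‖f j‖ ^ p) ^ (1 / p)

/-- Discrete `L^∞_h` norm. -/
def dLinf (M : ℕ) (f : ℤ → ℂ) : ℝ :=
  ⨆ j : (idx M), ‖f (j : ℤ)‖

/-- Discrete Fourier transform `𝓕_h f (k) = h ∑_{x ∈ 𝕋_h} f(x) e^{-ikx}`. -/
def dFT (M : ℕ) (f : ℤ → ℂ) (k : ℤ) : ℂ :=
  (mesh M : ℂ) * ∑ j ∈ idx M, f j * Complex.exp (-Complex.I * (k : ℂ) * (pt M j : ℂ))

/-- Discrete Sobolev norm `‖f‖_{H^s_h}`. -/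
def dSob (M : ℕ) (s : ℝ) (f : ℤ → ℂ) : ℝ :=
  Real.sqrt ((2 * Real.pi)⁻¹ * ∑ k ∈ idx M, (1 + (k : ℝ) ^ 2) ^ s * ‖dFT M f k‖ ^ 2)

/-- Symbol `σ_h(ξ) = |(2/h) sin(hξ/2)|^α` of the discrete fractional Laplacian. -/
def dsymb (M : ℕ) (α ξ : ℝ) : ℝ := |2 / mesh M * Real.sin (mesh M * ξ / 2)| ^ α

/-- Discrete linear propagator `U_h(t) = e^{-it(-Δ_h)^{α/2}}`. -/
def Uh (M : ℕ) (α t : ℝ) (f : ℤ → ℂ) (j : ℤ) : ℂ :=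
  (2 * Real.pi)⁻¹ * ∑ k ∈ idx M,
    Complex.exp (-Complex.I * (t : ℂ) * ((dsymb M α k : ℝ) : ℂ)) * dFT M f k *
      Complex.exp (Complex.I * (k : ℂ) * (pt M j : ℂ))

/-- Fourier coefficient on the torus `𝕋 = [-π, π)`. -/
def fCoef (f : ℝ → ℂ) (k : ℤ) : ℂ :=
  ∫ x in (-Real.pi)..Real.pi, f x * Complex.exp (-Complex.I * (k : ℂ) * (x : ℂ))

/-- `L²(𝕋)` norm. -/
def cL2 (f : ℝ → ℂ) : ℝ :=
  Real.sqrt (∫ x in (-Real.pi)..Real.pi, ‖f x‖ ^ 2)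

/-- Sobolev `H^s(𝕋)` norm. -/
def cSob (s : ℝ) (f : ℝ → ℂ) : ℝ :=
  Real.sqrt ((2 * Real.pi)⁻¹ * ∑' k : ℤ, (1 + (k : ℝ) ^ 2) ^ s * ‖fCoef f k‖ ^ 2)

/-- Membership in `H^s(𝕋)`. -/
def inHs (s : ℝ) (f : ℝ → ℂ) : Prop :=
  Summable fun k : ℤ => (1 + (k : ℝ) ^ 2) ^ s * ‖fCoef f k‖ ^ 2

/-- Continuum propagator `U(t) = e^{-it(-Δ)^{α/2}}` on the torus. -/
def Uc (α t : ℝ) (f : ℝ → ℂ) (x : ℝ) : ℂ :=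
  (2 * Real.pi)⁻¹ * ∑' k : ℤ,
    Complex.exp (-Complex.I * (t : ℂ) * ((|(k : ℝ)| ^ α : ℝ) : ℂ)) * fCoef f k *
      Complex.exp (Complex.I * (k : ℂ) * (x : ℂ))

/-- Discretization operator `d_h f (x) = h⁻¹ ∫_x^{x+h} f`. -/
def dh (M : ℕ) (f : ℝ → ℂ) (j : ℤ) : ℂ :=
  ((mesh M : ℝ) : ℂ)⁻¹ * ∫ x in (pt M j)..(pt M j + mesh M), f x

/-- Linear interpolation operator `p_h`. -/
def ph (M : ℕ) (g : ℤ → ℂ) (x : ℝ) : ℂ :=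
  g ⌊x / mesh M⌋ + (g (⌊x / mesh M⌋ + 1) - g ⌊x / mesh M⌋) *
    (((x - pt M ⌊x / mesh M⌋) / mesh M : ℝ) : ℂ)

/-- Cubic nonlinearity `|f|² f` on the lattice. -/
def cubic (f : ℤ → ℂ) (j : ℤ) : ℂ := ((‖f j‖ ^ 2 : ℝ) : ℂ) * f j

/-- Cubic nonlinearity `|f|² f` on the torus. -/
def cubicC (f : ℝ → ℂ) (x : ℝ) : ℂ := ((‖f x‖ ^ 2 : ℝ) : ℂ) * f x

/-- `u` solves the fractional discrete NLS with datum `u0` on the time set `I`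
(Duhamel formulation). -/
def IsDSol (M : ℕ) (α μ : ℝ) (I : Set ℝ) (u0 : ℤ → ℂ) (u : ℝ → ℤ → ℂ) : Prop :=
  (∀ j : ℤ, u 0 j = u0 j) ∧
  ∀ t ∈ I, ∀ j : ℤ, u t j =
    Uh M α t u0 j - Complex.I * (μ : ℂ) * ∫ τ in (0:ℝ)..t, Uh M α (t - τ) (cubic (u τ)) j

/-- `u` solves the fractional NLS on the torus with datum `u0` on the time set `I`
(Duhamel formulation). -/
def IsCSol (α μ : ℝ) (I : Set ℝ) (u0 : ℝ → ℂ) (u : ℝ → ℝ → ℂ) : Prop :=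
  (∀ x : ℝ, u 0 x = u0 x) ∧
  ∀ t ∈ I, ∀ x : ℝ, u t x =
    Uc α t u0 x - Complex.I * (μ : ℂ) * ∫ τ in (0:ℝ)..t, Uc α (t - τ) (cubicC (u τ)) x


/-- Discrete fractional Laplacian `(-Δ_h)^{α/2}`, the Fourier multiplier with symbol
`σ_h(k)` on the lattice. -/
def dFracLap (M : ℕ) (α : ℝ) (f : ℤ → ℂ) (j : ℤ) : ℂ :=
  (2 * Real.pi)⁻¹ * ∑ k ∈ idx M,
    ((dsymb M α k : ℝ) : ℂ) * dFT M f k * Complex.exp (Complex.I * (k : ℂ) * (pt M j : ℂ))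

lemma Mpos {M : ℕ} (hM : 1 ≤ M) : (0:ℝ) < M := by exact_mod_cast hM

lemma mesh_pos {M : ℕ} (hM : 1 ≤ M) : 0 < mesh M :=
  div_pos Real.pi_pos (Mpos hM)

lemma mesh_mul_M {M : ℕ} (hM : 1 ≤ M) : mesh M * M = Real.pi := by
  have := (Mpos hM).ne'
  rw [mesh]; field_simp

lemma idx_eq_map (M : ℕ) :
    idx M = (Finset.range (2*M)).map ⟨fun i : ℕ => (i:ℤ) - M, @id (Function.Injective fun i : ℕ => (i:ℤ) - M) (fun a b h => by simpa using h)⟩ := by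
  ext x
  simp only [idx, Finset.mem_Icc, Finset.mem_map, Finset.mem_range,
    Function.Embedding.coeFn_mk]
  constructor
  · intro hx
    exact ⟨(x + M).toNat, by omega, by omega⟩
  · rintro ⟨i, hi, rfl⟩; omega

lemma sum_exp (M : ℕ) (hM : 1 ≤ M) (m : ℤ) :
    ∑ j ∈ idx M, Complex.exp (Complex.I * (m:ℂ) * (pt M j : ℂ)) =
      if (2 * (M:ℤ)) ∣ m then (2 * (M:ℕ) : ℂ) else 0 := by
  have hMne : (M:ℂ) ≠ 0 := by exact_mod_cast (Mpos hM).ne'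
  have hmesh : ((mesh M : ℝ) : ℂ) = (Real.pi : ℂ) / M := by
    simp [mesh]
  have hpt : ∀ j : ℤ, ((pt M j : ℝ) : ℂ) = (Real.pi : ℂ) / M * j := by
    intro j; simp [pt, hmesh]
  have hpiI : (Real.pi:ℂ) * Complex.I ≠ 0 :=
    mul_ne_zero (by exact_mod_cast Real.pi_ne_zero) Complex.I_ne_zero
  by_cases hd : (2 * (M:ℤ)) ∣ m
  · rw [if_pos hd]
    obtain ⟨l, rfl⟩ := hd
    have h1 : ∀ j ∈ idx M, Complex.exp (Complex.I * ((2 * (M:ℤ) * l : ℤ):ℂ) * (pt M j : ℂ)) = 1 := by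
      intro j _
      rw [hpt]
      have : Complex.I * ((2 * (M:ℤ) * l : ℤ):ℂ) * ((Real.pi:ℂ) / M * j)
          = ((l * j : ℤ):ℂ) * (2 * Real.pi * Complex.I) := by
        push_cast
        field_simp
      rw [this, Complex.exp_int_mul_two_pi_mul_I]
    rw [Finset.sum_congr rfl h1]
    simp [idx, Int.card_Icc]
    norm_cast
    omega
  · rw [if_neg hd]
    set c : ℂ := Complex.I * (m:ℂ) * ((Real.pi:ℂ) / M) with hc
    have harg : ∀ j ∈ idx M, Complex.exp (Complex.I * (m:ℂ) * ((pt M j : ℝ):ℂ))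
        = Complex.exp (c * j) := by
      intro j _; rw [hpt]; congr 1; ring
    have hcne : Complex.exp c ≠ 1 := by
      intro h1
      rw [Complex.exp_eq_one_iff] at h1
      obtain ⟨k, hk⟩ := h1
      apply hd
      field_simp [hc] at hk
      have h2 : (Real.pi:ℂ) * Complex.I * (m:ℂ)
          = (Real.pi:ℂ) * Complex.I * ((2*(M:ℤ)*k : ℤ):ℂ) := by
        push_cast
        linear_combination (M:ℂ) * (hk - hc) - (Real.pi * Complex.I * m) * mul_inv_cancel₀ hMne
      have h3 : (m:ℂ) = ((2*(M:ℤ)*k : ℤ):ℂ) := mul_left_cancel₀ hpiI h2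
      exact ⟨k, by exact_mod_cast h3⟩
    rw [Finset.sum_congr rfl harg, idx_eq_map, Finset.sum_map]
    simp only [Function.Embedding.coeFn_mk]
    have key : ∀ i : ℕ, Complex.exp (c * (((i:ℤ) - (M:ℤ) : ℤ):ℂ))
        = Complex.exp c ^ i * Complex.exp (-(c * M)) := by
      intro i
      rw [← Complex.exp_nat_mul, ← Complex.exp_add]
      congr 1; push_cast; ring
    rw [Finset.sum_congr rfl (fun i _ => key i), ← Finset.sum_mul,
      geom_sum_eq hcne]
    have hpow : Complex.exp c ^ (2*M) = 1 := by
      rw [← Complex.exp_nat_mul]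
      have : ((2*M : ℕ):ℂ) * c = (m:ℂ) * (2 * Real.pi * Complex.I) := by
        rw [hc]; push_cast; field_simp
      rw [this, Complex.exp_int_mul_two_pi_mul_I]
    rw [hpow]
    simp







lemma dFT_plane (M : ℕ) (hM : 1 ≤ M) (n : ℤ) (c : ℂ) (k : ℤ) :
    dFT M (fun j => c * Complex.exp (Complex.I * (n:ℂ) * (pt M j : ℂ))) k =
      if (2 * (M:ℤ)) ∣ (n - k) then ((2 * Real.pi : ℝ):ℂ) * c else 0 := by
  have hMne : (M:ℂ) ≠ 0 := by exact_mod_cast (Mpos hM).ne'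
  have step : ∀ j ∈ idx M,
      (c * Complex.exp (Complex.I * (n:ℂ) * (pt M j : ℂ))) *
        Complex.exp (-Complex.I * (k : ℂ) * (pt M j : ℂ))
      = c * Complex.exp (Complex.I * ((n - k : ℤ):ℂ) * (pt M j : ℂ)) := by
    intro j _
    rw [mul_assoc, ← Complex.exp_add]
    congr 2
    push_cast
    ring
  rw [dFT, Finset.sum_congr rfl step, ← Finset.mul_sum, sum_exp M hM (n - k)]
  by_cases hd : (2 * (M:ℤ)) ∣ (n - k)
  · rw [if_pos hd, if_pos hd]
    have : ((mesh M : ℝ):ℂ) * (2 * (M:ℕ) : ℂ) = ((2 * Real.pi : ℝ):ℂ) := by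
      rw [show ((mesh M : ℝ):ℂ) = (Real.pi:ℂ)/M by simp [mesh]]
      push_cast
      field_simp
    rw [← mul_assoc, mul_comm ((mesh M : ℝ):ℂ) c, mul_assoc, this, mul_comm]
  · rw [if_neg hd, if_neg hd, mul_zero, mul_zero]

/-- The canonical representative of `n` modulo `2M` inside `idx M`. -/
lemma exists_rep (M : ℕ) (hM : 1 ≤ M) (n : ℤ) :
    ∃ k₀ l : ℤ, k₀ ∈ idx M ∧ n - k₀ = 2 * M * l := by
  refine ⟨(n + M) % (2 * M) - M, (n + M) / (2 * M), ?_, ?_⟩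
  · have h1 : 0 ≤ (n + M) % (2 * M) := Int.emod_nonneg _ (by positivity)
    have h2 : (n + M) % (2 * M) < 2 * M := Int.emod_lt_of_pos _ (by positivity)
    simp only [idx, Finset.mem_Icc]; omega
  · have := Int.mul_ediv_add_emod (n + M) (2 * M)
    omega

lemma rep_unique (M : ℕ) (hM : 1 ≤ M) {n k k₀ l : ℤ} (hk : k ∈ idx M)
    (hk₀ : k₀ ∈ idx M) (hl : n - k₀ = 2 * M * l) (hd : (2 * (M:ℤ)) ∣ (n - k)) :
    k = k₀ := by
  obtain ⟨l', hl'⟩ := hd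
  simp only [idx, Finset.mem_Icc] at hk hk₀
  have h1 : k₀ - k = 2 * M * (l' - l) := by linarith [hl, hl']
  rcases lt_trichotomy (l' - l) 0 with h | h | h
  · have : 2 * (M:ℤ) * (l' - l) ≤ 2 * M * (-1) :=
      mul_le_mul_of_nonneg_left (by omega) (by omega)
    omega
  · rw [h, mul_zero] at h1; omega
  · have : 2 * (M:ℤ) * 1 ≤ 2 * M * (l' - l) :=
      mul_le_mul_of_nonneg_left (by omega) (by omega)
    omega

lemma dsymb_periodic (M : ℕ) (hM : 1 ≤ M) (α : ℝ) {n k₀ l : ℤ}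
    (h : n - k₀ = 2 * M * l) : dsymb M α (k₀:ℝ) = dsymb M α (n:ℝ) := by
  unfold dsymb
  congr 1
  have hkz : k₀ = n - 2 * (M:ℤ) * l := by linarith
  have hk : (k₀:ℝ) = (n:ℝ) - 2 * (M:ℝ) * l := by exact_mod_cast hkz
  have harg : mesh M * (k₀:ℝ) / 2 = mesh M * (n:ℝ) / 2 + ((-l : ℤ):ℝ) * Real.pi := by
    rw [hk, ← mesh_mul_M hM]; push_cast; ring
  rw [harg, Real.sin_add_int_mul_pi]
  have h1 : |(-1:ℝ) ^ (-l)| = 1 := by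
    rcases Int.even_or_odd (-l) with he | ho
    · rw [he.neg_one_zpow]; simp
    · rw [Odd.neg_one_zpow ho]; simp
  rw [abs_mul, abs_mul, h1, one_mul, ← abs_mul]

lemma exp_periodic (M : ℕ) (hM : 1 ≤ M) {n k₀ l : ℤ} (h : n - k₀ = 2 * M * l) (j : ℤ) :
    Complex.exp (Complex.I * (k₀:ℂ) * (pt M j : ℂ)) =
      Complex.exp (Complex.I * (n:ℂ) * (pt M j : ℂ)) := by
  have hMne : (M:ℂ) ≠ 0 := by exact_mod_cast (Mpos hM).ne'
  have hpt : ((pt M j : ℝ) : ℂ) = (Real.pi : ℂ) / M * j := by simp [pt, mesh]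
  have hnz : n = k₀ + 2 * (M:ℤ) * l := by linarith
  have hn : (n:ℂ) = (k₀:ℂ) + 2 * (M:ℂ) * l := by exact_mod_cast hnz
  rw [hpt, hn]
  rw [show Complex.I * ((k₀:ℂ) + 2 * M * l) * ((Real.pi:ℂ) / M * j)
      = Complex.I * (k₀:ℂ) * ((Real.pi:ℂ) / M * j) + ((l * j : ℤ):ℂ) * (2 * Real.pi * Complex.I) by
    push_cast; field_simp]
  rw [Complex.exp_add, Complex.exp_int_mul_two_pi_mul_I, mul_one]

lemma dFracLap_plane (M : ℕ) (hM : 1 ≤ M) (α : ℝ) (n : ℤ) (c : ℂ) (j : ℤ) :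
    dFracLap M α (fun j' => c * Complex.exp (Complex.I * (n:ℂ) * (pt M j' : ℂ))) j =
      ((dsymb M α (n:ℝ) : ℝ):ℂ) * (c * Complex.exp (Complex.I * (n:ℂ) * (pt M j : ℂ))) := by
  obtain ⟨k₀, l, hk₀, hl⟩ := exists_rep M hM n
  have hstep : ∀ k ∈ idx M,
      ((dsymb M α (k:ℝ) : ℝ):ℂ) *
        dFT M (fun j' => c * Complex.exp (Complex.I * (n:ℂ) * (pt M j' : ℂ))) k *
        Complex.exp (Complex.I * (k:ℂ) * (pt M j : ℂ))
      = if k = k₀ then ((dsymb M α (n:ℝ) : ℝ):ℂ) * (((2 * Real.pi : ℝ):ℂ) * c) *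
          Complex.exp (Complex.I * (n:ℂ) * (pt M j : ℂ)) else 0 := by
    intro k hk
    rw [dFT_plane M hM n c k]
    by_cases hkk : k = k₀
    · subst hkk
      rw [if_pos ⟨l, hl⟩, if_pos rfl, dsymb_periodic M hM α hl, exp_periodic M hM hl]
    · rw [if_neg, if_neg hkk]
      · simp
      · intro hdvd
        exact hkk (rep_unique M hM hk hk₀ hl hdvd)
  rw [dFracLap, Finset.sum_congr rfl hstep, Finset.sum_ite_eq' (idx M) k₀, if_pos hk₀]
  have hpi : (Real.pi:ℂ) ≠ 0 := by exact_mod_cast Real.pi_ne_zero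
  push_cast
  field_simp



lemma deriv_exp_lin (K L : ℂ) (lam : ℝ) (t : ℝ) :
    deriv (fun τ : ℝ => K * Complex.exp (-Complex.I * (τ:ℂ) * (lam:ℂ)) * L) t
      = -Complex.I * (lam:ℂ) * (K * Complex.exp (-Complex.I * (t:ℂ) * (lam:ℂ)) * L) := by
  have heq : (fun τ : ℝ => K * Complex.exp (-Complex.I * (τ:ℂ) * (lam:ℂ)) * L)
      = fun τ : ℝ => (K * L) * Complex.exp ((-Complex.I * (lam:ℂ)) * (τ:ℂ)) := by
    funext τ
    rw [show -Complex.I * (τ:ℂ) * (lam:ℂ) = (-Complex.I * (lam:ℂ)) * (τ:ℂ) by ring]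
    ring
  rw [heq]
  have h1 : HasDerivAt (fun w : ℂ => Complex.exp ((-Complex.I * (lam:ℂ)) * w))
      (Complex.exp ((-Complex.I * (lam:ℂ)) * (t:ℂ)) * (-Complex.I * (lam:ℂ))) (t:ℂ) := by
    simpa using ((hasDerivAt_id (t:ℂ)).const_mul (-Complex.I * (lam:ℂ))).cexp
  rw [((h1.const_mul (K * L)).comp_ofReal).deriv]
  rw [show -Complex.I * (t:ℂ) * (lam:ℂ) = (-Complex.I * (lam:ℂ)) * (t:ℂ) by ring]
  ring

lemma dh_plane (M : ℕ) (hM : 1 ≤ M) (n : ℤ) (hn : n ≠ 0) (c : ℂ) (u0 : ℝ → ℂ)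
    (hu0 : ∀ x : ℝ, u0 x = c * Complex.exp (Complex.I * (n : ℂ) * (x : ℂ))) (j : ℤ) :
    dh M u0 j = c * ((Complex.exp (Complex.I * (mesh M : ℂ) * (n : ℂ)) - 1) /
      (Complex.I * (mesh M : ℂ) * (n : ℂ))) * Complex.exp (Complex.I * (n : ℂ) * (pt M j : ℂ)) := by
  have hIn : Complex.I * (n:ℂ) ≠ 0 :=
    mul_ne_zero Complex.I_ne_zero (by exact_mod_cast hn)
  have hint : (∫ x in (pt M j)..(pt M j + mesh M), u0 x)
      = c * ((Complex.exp (Complex.I * (n:ℂ) * ((pt M j + mesh M : ℝ):ℂ))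
          - Complex.exp (Complex.I * (n:ℂ) * ((pt M j : ℝ):ℂ))) / (Complex.I * (n:ℂ))) := by
    have : ∀ x : ℝ, u0 x = c * Complex.exp ((Complex.I * (n:ℂ)) * (x:ℂ)) := by
      intro x; rw [hu0 x]
    simp only [this]
    rw [intervalIntegral.integral_const_mul, integral_exp_mul_complex hIn]
  rw [dh, hint]
  have hmne : ((mesh M : ℝ):ℂ) ≠ 0 := by exact_mod_cast (mesh_pos hM).ne'
  have hsplit : Complex.exp (Complex.I * (n:ℂ) * ((pt M j + mesh M : ℝ):ℂ))
      = Complex.exp (Complex.I * (n:ℂ) * ((pt M j : ℝ):ℂ)) *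
        Complex.exp (Complex.I * ((mesh M : ℝ):ℂ) * (n:ℂ)) := by
    rw [← Complex.exp_add]
    congr 1
    push_cast
    ring
  rw [hsplit]
  have hI : Complex.I ≠ 0 := Complex.I_ne_zero
  have hnC : (n:ℂ) ≠ 0 := by exact_mod_cast hn
  field_simp

lemma I_mul_neg_I_mul (z x : ℂ) : Complex.I * (-Complex.I * z * x) = z * x := by
  linear_combination (-(z*x)) * Complex.I_mul_I

theorem statement15 (M : ℕ) (hM : 1 ≤ M) (α μ s : ℝ) (hα : 0 < α) (hμ : μ = 1 ∨ μ = -1)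
    (A : ℂ) (hA : A ≠ 0) (n : ℤ) (hn : n ≠ 0) (hn2 : |n| < 2 * (M : ℤ))
    (B : ℂ) (hB : B = (Complex.exp (Complex.I * (mesh M : ℂ) * (n : ℂ)) - 1) /
      (Complex.I * (mesh M : ℂ) * (n : ℂ)))
    (u0 : ℝ → ℂ)
    (hu0 : ∀ x : ℝ, u0 x = A * ((|(n : ℝ)| ^ (-s) : ℝ) : ℂ) *
      Complex.exp (Complex.I * (n : ℂ) * (x : ℂ)))
    (uh : ℝ → ℤ → ℂ)
    (huh : ∀ t : ℝ, ∀ j : ℤ, uh t j =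
      A * ((|(n : ℝ)| ^ (-s) : ℝ) : ℂ) * B *
        Complex.exp (-Complex.I * (t : ℂ) *
          ((|2 / mesh M * Real.sin (mesh M * n / 2)| ^ α
            + μ * ‖A‖ ^ 2 * |(n : ℝ)| ^ (-2 * s) * ‖B‖ ^ 2 : ℝ) : ℂ)) *
        Complex.exp (Complex.I * (n : ℂ) * ((pt M j : ℝ) : ℂ))) :
    (∀ t : ℝ, ∀ j : ℤ, Complex.I * deriv (fun τ : ℝ => uh τ j) t =
        dFracLap M α (uh t) j + (μ : ℂ) * ((‖uh t j‖ ^ 2 : ℝ) : ℂ) * uh t j) ∧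
    (∀ j : ℤ, uh 0 j = dh M u0 j) ∧
    (∀ j : ℤ, dh M u0 j = A * ((|(n : ℝ)| ^ (-s) : ℝ) : ℂ) * B *
        Complex.exp (Complex.I * (n : ℂ) * ((pt M j : ℝ) : ℂ))) := by
  have hnR : (0:ℝ) < |(n:ℝ)| := abs_pos.2 (by exact_mod_cast hn)
  set lam : ℝ := |2 / mesh M * Real.sin (mesh M * n / 2)| ^ α
      + μ * ‖A‖ ^ 2 * |(n : ℝ)| ^ (-2 * s) * ‖B‖ ^ 2 with hlam
  have key3 : ∀ j : ℤ, dh M u0 j = A * ((|(n : ℝ)| ^ (-s) : ℝ) : ℂ) * B *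
      Complex.exp (Complex.I * (n : ℂ) * ((pt M j : ℝ) : ℂ)) := by
    intro j
    have h := dh_plane M hM n hn (A * ((|(n : ℝ)| ^ (-s) : ℝ) : ℂ)) u0
      (fun x => hu0 x) j
    rw [h, hB]
  refine ⟨?_, ?_, key3⟩
  · intro t j
    have hns2 : (|(n:ℝ)| ^ (-s)) ^ 2 = |(n:ℝ)| ^ (-2*s) := by
      rw [pow_two, ← Real.rpow_add hnR]
      congr 1; ring
    have hfun : (fun τ : ℝ => uh τ j)
        = fun τ : ℝ => (A * ((|(n : ℝ)| ^ (-s) : ℝ) : ℂ) * B) *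
            Complex.exp (-Complex.I * (τ:ℂ) * ((lam : ℝ):ℂ)) *
            Complex.exp (Complex.I * (n : ℂ) * ((pt M j : ℝ) : ℂ)) :=
      funext fun τ => huh τ j
    have huht : uh t = fun j' => (A * ((|(n : ℝ)| ^ (-s) : ℝ) : ℂ) * B *
        Complex.exp (-Complex.I * (t:ℂ) * ((lam : ℝ):ℂ))) *
        Complex.exp (Complex.I * (n : ℂ) * ((pt M j' : ℝ) : ℂ)) :=
      funext fun j' => huh t j'
    have e1 : dFracLap M α (uh t) j = ((dsymb M α (n:ℝ) : ℝ):ℂ) *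
        ((A * ((|(n : ℝ)| ^ (-s) : ℝ) : ℂ) * B *
          Complex.exp (-Complex.I * (t:ℂ) * ((lam : ℝ):ℂ))) *
          Complex.exp (Complex.I * (n : ℂ) * ((pt M j : ℝ) : ℂ))) := by
      rw [huht]
      exact dFracLap_plane M hM α n _ j
    have e2 : ‖uh t j‖ = ‖A‖ * |(n:ℝ)| ^ (-s) * ‖B‖ := by
      rw [huh t j]
      simp [map_mul, Complex.norm_exp, Complex.norm_real, Complex.mul_re, Complex.mul_im,
        abs_of_nonneg (Real.rpow_nonneg (abs_nonneg ((n:ℝ))) (-s))]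
    rw [hfun, deriv_exp_lin, I_mul_neg_I_mul, e1, e2, huh t j]
    have habs2 : ((‖A‖ * |(n:ℝ)| ^ (-s) * ‖B‖) ^ 2 : ℝ)
        = ‖A‖ ^ 2 * |(n:ℝ)| ^ (-2*s) * ‖B‖ ^ 2 := by
      rw [mul_pow, mul_pow, hns2]
    rw [habs2, hlam]
    simp only [dsymb]
    push_cast
    ring
  · intro j
    rw [huh 0 j, key3 j]
    push_cast
    simp

end
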